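/- Let V be a finite-dimensional real vector space and let B₁, B₂ : V × V → ℝ be symmetric bilinear forms. Assume B₂ is positive semidefinite and its kernel is the subspace W = {v ∈ V : B₂(v, u) = 0 for all u ∈ V}, and assume B₁ is positive definite when restricted to W (B₁(w,w) > 0 for all nonzero w ∈ W). Then there exists r > 0 such that for every ε with 0 < ε ≤ r, the symmetric bilinear form ε·B₁ + B₂ is positive definite on all of V. -/

import Mathlib

/-- Patrick's lemma: if `B₂` is a positive semidefinite symmetric bilinear form on a
finite-dimensional real vector space whose kernel is `W`, and the symmetric bilinear form
`B₁` is positive definite on `W`, then `ε·B₁ + B₂` is positive definite on all of `V` for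
every sufficiently small `ε > 0`. -/
theorem stmt_6 (V : Type*) [AddCommGroup V] [Module ℝ V] [FiniteDimensional ℝ V]
    (B₁ B₂ : LinearMap.BilinForm ℝ V)
    (h₁sym : ∀ u v : V, B₁ u v = B₁ v u)
    (h₂sym : ∀ u v : V, B₂ u v = B₂ v u)
    (h₂pos : ∀ v : V, 0 ≤ B₂ v v)
    (h₁W : ∀ w : V, w ≠ 0 → (∀ u : V, B₂ w u = 0) → 0 < B₁ w w) :
    ∃ r > (0 : ℝ), ∀ ε : ℝ, 0 < ε → ε ≤ r →
      ∀ v : V, v ≠ 0 → 0 < ε * B₁ v v + B₂ v v := by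
  classical
  -- null vectors of B₂ are in the kernel
  have hnull : ∀ v : V, B₂ v v = 0 → ∀ u : V, B₂ v u = 0 := by
    intro v hv u
    set a := B₂ u u with ha
    set bb := B₂ v u with hb
    have ha0 : 0 ≤ a := h₂pos u
    have h1 : (0:ℝ) < a + 1 := by linarith
    have key := h₂pos ((a+1) • v + (-bb) • u)
    simp only [map_add, map_smul, LinearMap.add_apply, LinearMap.smul_apply,
      smul_eq_mul] at key
    rw [hv] at key
    have hsym' : B₂ u v = bb := h₂sym u v
    rw [hsym'] at key
    rw [← hb, ← ha] at key
    have key3 : 0 ≤ -(bb^2) * (a + 2) := by nlinarith [key]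
    have hsq : bb^2 ≤ 0 := by nlinarith [mul_nonneg (sq_nonneg bb) ha0]
    have hz : bb^2 = 0 := le_antisymm hsq (sq_nonneg bb)
    exact pow_eq_zero_iff two_ne_zero |>.mp hz
  set n := Module.finrank ℝ V with hn
  let e : V ≃ₗ[ℝ] (Fin n → ℝ) := (Module.finBasis ℝ V).equivFun
  let φ : (Fin n → ℝ) → ℝ := fun x => B₁ (e.symm x) (e.symm x)
  let ψ : (Fin n → ℝ) → ℝ := fun x => B₂ (e.symm x) (e.symm x)
  have hcont : ∀ B : LinearMap.BilinForm ℝ V,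
      Continuous (fun x : Fin n → ℝ => B (e.symm x) (e.symm x)) := by
    intro B
    let B' : LinearMap.BilinForm ℝ (Fin n → ℝ) :=
      B.compl₁₂ e.symm.toLinearMap e.symm.toLinearMap
    let F : (Fin n → ℝ) →ₗ[ℝ] ((Fin n → ℝ) →L[ℝ] ℝ) :=
      { toFun := fun x => LinearMap.toContinuousLinearMap (B' x),
        map_add' := by intro x y; ext u; simp [B'],
        map_smul' := by intro c x; ext u; simp [B'] }
    have hF : Continuous F := F.continuous_of_finiteDimensional
    have h2 : Continuous fun x => (F x) x := hF.clm_apply continuous_id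
    convert h2 using 2 with x
    rfl
  have hφ := hcont B₁
  have hψ := hcont B₂
  set S := Metric.sphere (0 : Fin n → ℝ) 1 with hSdef
  have hS : IsCompact S := isCompact_sphere 0 1
  set K := S ∩ φ ⁻¹' Set.Iic 0 with hKdef
  have hK : IsCompact K := hS.inter_right (isClosed_Iic.preimage hφ)
  have hψK : ∀ x ∈ K, 0 < ψ x := by
    rintro x ⟨hxS, hxφ⟩
    have hx0 : e.symm x ≠ 0 := by
      intro h
      have : x = 0 := by
        have := congrArg e h
        simpa using this
      rw [this] at hxS
      simp [hSdef] at hxS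
    rcases lt_or_ge 0 (ψ x) with h | h
    · exact h
    have hψ0 : ψ x = 0 := le_antisymm h (h₂pos _)
    have hpos := h₁W (e.symm x) hx0 (hnull _ hψ0)
    exact absurd hpos (not_lt.mpr hxφ)
  have hm : ∃ m > (0:ℝ), ∀ x ∈ K, m ≤ ψ x := by
    rcases K.eq_empty_or_nonempty with h | h
    · exact ⟨1, one_pos, by simp [h]⟩
    · obtain ⟨x₀, hx₀, hmin⟩ := hK.exists_isMinOn h hψ.continuousOn
      exact ⟨ψ x₀, hψK _ hx₀, fun x hx => hmin hx⟩
  obtain ⟨C, hC⟩ := hS.exists_bound_of_continuousOn hφ.continuousOn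
  obtain ⟨m, hm0, hmK⟩ := hm
  set M : ℝ := max C 1 with hMdef
  have hM0 : (0:ℝ) < M := lt_of_lt_of_le one_pos (le_max_right _ _)
  have hMb : ∀ x ∈ S, |φ x| ≤ M := fun x hx =>
    le_trans (by simpa [Real.norm_eq_abs] using hC x hx) (le_max_left _ _)
  refine ⟨m / (2 * M), by positivity, ?_⟩
  intro ε hε hεr v hv
  set x : Fin n → ℝ := e v with hxdef
  have hx : x ≠ 0 := by
    intro h
    apply hv
    have := congrArg e.symm h
    simpa [hxdef] using this
  have hnx : (0:ℝ) < ‖x‖ := norm_pos_iff.mpr hx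
  set x' := ‖x‖⁻¹ • x with hx'def
  have hx'S : x' ∈ S := by
    simp [hSdef, hx'def, norm_smul, abs_of_pos (inv_pos.mpr hnx),
      inv_mul_cancel₀ hnx.ne']
  have hes : e.symm x' = ‖x‖⁻¹ • v := by
    simp [hx'def, hxdef, map_smul]
  have hφ' : B₁ v v = ‖x‖^2 * φ x' := by
    simp only [φ, hes, map_smul, LinearMap.smul_apply, smul_eq_mul]
    field_simp
  have hψ' : B₂ v v = ‖x‖^2 * ψ x' := by
    simp only [ψ, hes, map_smul, LinearMap.smul_apply, smul_eq_mul]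
    field_simp
  have hkey : 0 < ε * φ x' + ψ x' := by
    by_cases hc : φ x' ≤ 0
    · have hxK : x' ∈ K := ⟨hx'S, hc⟩
      have h1 := hmK x' hxK
      have h2 : |φ x'| ≤ M := hMb x' hx'S
      have h3 : -M ≤ φ x' := (abs_le.mp h2).1
      have hεM : ε * M ≤ m / 2 := by
        have := mul_le_mul_of_nonneg_right hεr (le_of_lt hM0)
        calc ε * M ≤ (m / (2 * M)) * M := this
          _ = m / 2 := by field_simp
      nlinarith
    · push_neg at hc
      have hψ0 : 0 ≤ ψ x' := h₂pos _
      nlinarith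
  rw [hφ', hψ']
  nlinarith [mul_pos (pow_pos hnx 2) hkey]
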